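/- arXiv:2210.07843 — 4 statements merged into one kernel-verified Lean document; each statement's English description precedes it below -/
import Mathlib

section
/- Let e ≥ 1, let b₁,…,b_e and c₁,…,c_e be elements of a commutative ring, and let M, N be natural numbers. Then the coefficient of the multilinear monomial t₁t₂⋯t_e in the polynomial (1 + b₁t₁ + ⋯ + b_e t_e)^M · (1 + c₁t₁ + ⋯ + c_e t_e)^N equals the sum over all subsets S of {1,…,e} of (M)_{|S|} · (N)_{e−|S|} · ∏_{i∈S} b_i · ∏_{i∉S} c_i, where (x)_k = x(x−1)⋯(x−k+1) denotes the falling factorial. -/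
open MvPolynomial Finset

lemma sf_apply {e : ℕ} (T : Finset (Fin e)) (j : Fin e) :
    ((∑ i ∈ T, Finsupp.single i 1 : Fin e →₀ ℕ)) j = if j ∈ T then 1 else 0 := by
  rw [Finsupp.finset_sum_apply]
  simp [Finsupp.single_apply]

lemma sf_support {e : ℕ} (T : Finset (Fin e)) :
    (∑ i ∈ T, Finsupp.single i 1 : Fin e →₀ ℕ).support = T := by
  ext j
  simp [Finsupp.mem_support_iff, sf_apply]

lemma descFac_rec (M k : ℕ) :
    (M + 1).descFactorial k = M.descFactorial k + k * M.descFactorial (k - 1) := by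
  cases k with
  | zero => simp
  | succ k =>
    rcases le_or_gt k M with h | h
    · rw [Nat.succ_descFactorial_succ, Nat.descFactorial_succ]
      have : M + 1 = (M - k) + (k + 1) := by omega
      rw [this, Nat.add_mul]
      simp
    · have h1 : M.descFactorial (k + 1) = 0 := Nat.descFactorial_eq_zero_iff_lt.mpr (Nat.lt_succ_of_lt h)
      have h2 : M.descFactorial k = 0 := Nat.descFactorial_eq_zero_iff_lt.mpr h
      rw [Nat.succ_descFactorial_succ, h1]
      simp [Nat.add_sub_cancel, h2]

lemma aux_pow_coeff {R : Type*} [CommRing R] {e : ℕ} (f : Fin e → R) (M : ℕ)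
    (T : Finset (Fin e)) :
    MvPolynomial.coeff (∑ i ∈ T, Finsupp.single i 1)
      ((1 + ∑ i : Fin e, C (f i) * X i) ^ M : MvPolynomial (Fin e) R)
    = (Nat.descFactorial M T.card : R) * ∏ i ∈ T, f i := by
  induction M generalizing T with
  | zero =>
    rw [pow_zero, coeff_one]
    rcases eq_or_ne T ∅ with rfl | h
    · simp
    · rw [if_neg, Nat.descFactorial_eq_zero_iff_lt.mpr]
      · simp
      · have := Finset.card_pos.mpr (Finset.nonempty_of_ne_empty h)
        omega
      · intro h0
        apply h
        have := sf_support T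
        rw [← h0] at this
        simpa using this.symm
  | succ M ih =>
    rw [pow_succ, mul_add, mul_one, coeff_add]
    have h2 : MvPolynomial.coeff (∑ i ∈ T, Finsupp.single i 1)
        ((1 + ∑ i : Fin e, C (f i) * X i) ^ M * ∑ i : Fin e, C (f i) * X i :
          MvPolynomial (Fin e) R)
        = (T.card : R) * (Nat.descFactorial M (T.card - 1) : R) * ∏ i ∈ T, f i := by
      rw [Finset.mul_sum]
      have : ∀ i : Fin e,
          (1 + ∑ i : Fin e, C (f i) * X i) ^ M * (C (f i) * X i)
          = C (f i) * ((1 + ∑ i : Fin e, C (f i) * X i) ^ M * X i) := by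
        intro i; ring
      simp_rw [this, coeff_sum, coeff_C_mul, coeff_mul_X']
      rw [sf_support]
      simp_rw [mul_ite, mul_zero]
      rw [Finset.sum_ite_mem, Finset.univ_inter]
      have key : ∀ i ∈ T,
          f i * MvPolynomial.coeff ((∑ j ∈ T, Finsupp.single j 1) - Finsupp.single i 1)
            ((1 + ∑ i : Fin e, C (f i) * X i) ^ M : MvPolynomial (Fin e) R)
          = (Nat.descFactorial M (T.card - 1) : R) * ∏ j ∈ T, f j := by
        intro i hi
        have hd : (∑ j ∈ T, Finsupp.single j 1 : Fin e →₀ ℕ) - Finsupp.single i 1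
            = ∑ j ∈ T.erase i, Finsupp.single j 1 := by
          rw [← Finset.add_sum_erase T _ hi, add_tsub_cancel_left]
        rw [hd, ih (T.erase i), Finset.card_erase_of_mem hi]
        rw [← mul_assoc, mul_comm (f i), mul_assoc, Finset.mul_prod_erase T f hi]
      rw [Finset.sum_congr rfl key, Finset.sum_const, nsmul_eq_mul, mul_assoc]
    rw [ih T, h2, descFac_rec]
    push_cast
    ring

lemma sf_decomp {e : ℕ} (p : (Fin e →₀ ℕ) × (Fin e →₀ ℕ))
    (hp : p.1 + p.2 = ∑ i : Fin e, Finsupp.single i 1) :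
    (∑ i ∈ p.1.support, Finsupp.single i 1 : Fin e →₀ ℕ) = p.1 ∧
    (∑ i ∈ p.1.supportᶜ, Finsupp.single i 1 : Fin e →₀ ℕ) = p.2 := by
  have hbound : ∀ j, p.1 j + p.2 j = 1 := by
    intro j
    have := congrArg (fun f : Fin e →₀ ℕ => f j) hp
    simpa [Finsupp.add_apply, sf_apply] using this
  constructor
  · ext j
    rw [sf_apply]
    by_cases hj : j ∈ p.1.support
    · rw [if_pos hj]
      have := Finsupp.mem_support_iff.mp hj
      have hb := hbound j
      omega
    · rw [if_neg hj]
      exact (Finsupp.notMem_support_iff.mp hj).symm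
  · ext j
    rw [sf_apply]
    by_cases hj : j ∈ p.1.support
    · rw [if_neg (by simpa using hj)]
      have := Finsupp.mem_support_iff.mp hj
      have hb := hbound j
      omega
    · rw [if_pos (by simpa using hj)]
      have := Finsupp.notMem_support_iff.mp hj
      have hb := hbound j
      omega

/-- The coefficient of the squarefree monomial `t₁⋯t_e` in
`(1 + ∑ bᵢtᵢ)^M * (1 + ∑ cᵢtᵢ)^N` is the sum over subsets `S` of
`(M)_{|S|} (N)_{e-|S|} ∏_{i∈S} bᵢ ∏_{i∉S} cᵢ`. -/
theorem dJ_multilinear_coeff {R : Type*} [CommRing R] (e : ℕ) (he : 1 ≤ e)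
    (b c : Fin e → R) (M N : ℕ) :
    MvPolynomial.coeff (∑ i : Fin e, Finsupp.single i 1)
      (((1 + ∑ i : Fin e, C (b i) * X i) ^ M) *
       ((1 + ∑ i : Fin e, C (c i) * X i) ^ N) : MvPolynomial (Fin e) R)
    = ∑ S : Finset (Fin e),
        (Nat.descFactorial M S.card : R) * (Nat.descFactorial N (e - S.card) : R) *
          (∏ i ∈ S, b i) * (∏ i ∈ Sᶜ, c i) := by
  rw [MvPolynomial.coeff_mul]
  refine (Finset.sum_nbij' (fun p => p.1.support) (fun S => (∑ i ∈ S, Finsupp.single i 1, ∑ i ∈ Sᶜ, Finsupp.single i 1)) ?_ ?_ ?_ ?_ ?_).symm.symm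
  · intro p hp
    exact Finset.mem_univ _
  · intro S _
    rw [Finset.HasAntidiagonal.mem_antidiagonal]
    rw [Finset.sum_add_sum_compl]
  · intro p hp
    rw [Finset.HasAntidiagonal.mem_antidiagonal] at hp
    obtain ⟨h1, h2⟩ := sf_decomp p hp
    exact Prod.ext h1 h2
  · intro S _
    simp [sf_support]
  · intro p hp
    rw [Finset.HasAntidiagonal.mem_antidiagonal] at hp
    obtain ⟨h1, h2⟩ := sf_decomp p hp
    rw [← h1, ← h2, aux_pow_coeff, aux_pow_coeff,
      Finset.card_compl, Fintype.card_fin, sf_support]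
    ring
end

section
/- Let g, r, d be natural numbers with d ≥ r + g. Then ∑_{m=0}^{r} C(g,m) · C(d−r−m, r−m) = ∑_{m=0}^{r} 2^m · C(g,m) · C(d−r−g, r−m). -/
open Finset

open Polynomial in
theorem c2pow_aux (g k : ℕ) : ((2*X + 1 : ℕ[X])^g).coeff k = 2^k * g.choose k := by
  rw [add_pow, finset_sum_coeff]
  have : ∀ i ∈ Finset.range (g+1), ((2*X:ℕ[X])^i * 1^(g-i) * (g.choose i : ℕ[X])).coeff k
      = if k = i then 2^k * g.choose k else 0 := by
    intro i _
    have h2 : ((2*X:ℕ[X])^i * 1^(g-i) * (g.choose i : ℕ[X]))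
        = ((2^i * g.choose i : ℕ) : ℕ[X]) * X^i := by
      push_cast
      ring
    rw [h2, coeff_natCast_mul, coeff_X_pow]
    split
    · subst ‹k = i›; simp [Nat.cast_id, mul_comm]
    · simp
  rw [Finset.sum_congr rfl this, Finset.sum_ite_eq]
  simp only [Finset.mem_range]
  split
  · rfl
  · rw [Nat.choose_eq_zero_of_lt (by omega : g < k), mul_zero]

open Polynomial in
theorem dJ_double_points_identity (g r d : ℕ) (h : r + g ≤ d) :
    ∑ m ∈ Finset.range (r + 1), Nat.choose g m * Nat.choose (d - r - m) (r - m)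
      = ∑ m ∈ Finset.range (r + 1), 2 ^ m * Nat.choose g m * Nat.choose (d - r - g) (r - m) := by
  set n := d - r with hn
  have hg : g ≤ n := by omega
  -- RHS is a coefficient of (2X+1)^g * (1+X)^(n-g)
  have key1 : ((2*X + 1 : ℕ[X])^g * (1+X)^(n-g)).coeff r
      = ∑ m ∈ Finset.range (r + 1), 2 ^ m * Nat.choose g m * Nat.choose (n - g) (r - m) := by
    rw [coeff_mul, Finset.Nat.sum_antidiagonal_eq_sum_range_succ_mk]
    refine Finset.sum_congr rfl fun m hm => ?_
    rw [c2pow_aux, coeff_one_add_X_pow, Nat.cast_id, mul_assoc]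
  -- expansion used for the LHS
  have expand : ((2*X + 1 : ℕ[X])^g * (1+X)^(n-g))
      = ∑ k ∈ Finset.range (g+1),
          ((g.choose k : ℕ[X]) * (1+X)^(n-k)) * X^k := by
    have h1 : (2*X + 1 : ℕ[X]) = X + (1+X) := by ring
    rw [h1, add_pow, Finset.sum_mul]
    refine Finset.sum_congr rfl fun k hk => ?_
    rw [Finset.mem_range] at hk
    have h2 : n - k = (g - k) + (n - g) := by omega
    rw [h2, pow_add]
    ring
  have key2 : ((2*X + 1 : ℕ[X])^g * (1+X)^(n-g)).coeff r
      = ∑ k ∈ Finset.range (g+1),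
          (if k ≤ r then g.choose k * (n-k).choose (r-k) else 0) := by
    rw [expand, finset_sum_coeff]
    refine Finset.sum_congr rfl fun k _ => ?_
    rw [coeff_mul_X_pow', coeff_natCast_mul, coeff_one_add_X_pow]; simp
  -- equate the two range sums via a common larger range
  have e1 : ∑ k ∈ Finset.range (g+1),
        (if k ≤ r then g.choose k * (n-k).choose (r-k) else 0)
      = ∑ k ∈ Finset.range (g+r+1),
        (if k ≤ r then g.choose k * (n-k).choose (r-k) else 0) := by
    refine Finset.sum_subset (by intro x hx; simp at hx ⊢; omega) ?_
    intro x hx hxn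
    simp only [Finset.mem_range] at hx hxn
    rw [Nat.choose_eq_zero_of_lt (by omega : g < x), zero_mul, ite_self]
  have e2 : ∑ k ∈ Finset.range (g+r+1),
        (if k ≤ r then g.choose k * (n-k).choose (r-k) else 0)
      = ∑ k ∈ Finset.range (r+1), g.choose k * (n-k).choose (r-k) := by
    rw [← Finset.sum_subset (s₁ := Finset.range (r+1))
      (by intro x hx; simp at hx ⊢; omega)
      (by intro x hx hxn; simp only [Finset.mem_range] at hx hxn
          rw [if_neg (by omega)])]
    refine Finset.sum_congr rfl fun k hk => ?_
    rw [Finset.mem_range] at hk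
    rw [if_pos (by omega)]
  calc ∑ m ∈ Finset.range (r + 1), Nat.choose g m * Nat.choose (n - m) (r - m)
      = ((2*X + 1 : ℕ[X])^g * (1+X)^(n-g)).coeff r := by rw [key2, e1, e2]
    _ = _ := key1
end

section
/- Let e ≥ 1, let g ≥ e + 1 be an integer, and let a₁,…,a_e be rational numbers. Define the de Jonquières bracket [a₁⋯a_e] := a₁⋯a_e · (g!/(g−e−1)!) · ∑_{j=0}^{e} (−1)^j · σ_{e−j}(a₁,…,a_e) / (g−e+j), where σ_k denotes the k-th elementary symmetric polynomial (σ₀ = 1). Then [a₁⋯a_e] = ∑_{S ⊆ {1,…,e}} (g)_{|S|} · (e−g)_{e−|S|} · ∏_{i∈S} a_i² · ∏_{i∉S} a_i, where (x)_k = x(x−1)⋯(x−k+1) is the falling factorial (here evaluated at the possibly negative integer e−g). -/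
open Finset

/-- The falling factorial `x(x-1)⋯(x-k+1)` of a rational number. -/
def fallQ (x : ℚ) (k : ℕ) : ℚ := ∏ j ∈ Finset.range k, (x - j)

/-- The `k`-th elementary symmetric function of `a₁,…,a_e`. -/
def esymmQ (e : ℕ) (a : Fin e → ℚ) (k : ℕ) : ℚ :=
  ∑ S ∈ Finset.univ.powersetCard k, ∏ i ∈ S, a i

lemma fallQ_succ (x : ℚ) (k : ℕ) : fallQ x (k+1) = fallQ x k * (x - k) := by
  simp [fallQ, Finset.prod_range_succ]

lemma fallQ_nat (g k : ℕ) (h : k ≤ g) :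
    fallQ (g:ℚ) k * ((g-k).factorial : ℚ) = (g.factorial : ℚ) := by
  induction k with
  | zero => simp [fallQ]
  | succ k ih =>
    have hk : k ≤ g := Nat.le_of_succ_le h
    have h2 : ((g:ℚ) - k) * ((g-(k+1)).factorial : ℚ) = ((g-k).factorial : ℚ) := by
      have h1 : g - k = g - (k+1) + 1 := by omega
      rw [h1, Nat.factorial_succ, Nat.cast_mul, ← h1, Nat.cast_sub hk]
    rw [fallQ_succ, mul_assoc, h2, ih hk]

lemma fallQ_neg (c m : ℕ) :
    fallQ (-(c:ℚ)-1) m * (c.factorial : ℚ) = (-1)^m * ((c+m).factorial : ℚ) := by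
  induction m with
  | zero => simp [fallQ]
  | succ m ih =>
    have hx : (-(c:ℚ)-1-m) = -(((c+m+1 : ℕ)):ℚ) := by push_cast; ring
    rw [fallQ_succ, mul_right_comm, ih, hx]
    have h1 : c + (m+1) = (c+m) + 1 := by omega
    rw [h1, Nat.factorial_succ]
    push_cast
    ring

lemma key (e g k : ℕ) (hk : k ≤ e) (hg : e + 1 ≤ g) :
    fallQ (g:ℚ) k * fallQ ((e:ℚ) - g) (e - k)
      = (-1)^(e-k) * ((g.factorial : ℚ) / ((g - e - 1).factorial : ℚ)) / ((g:ℚ) - k) := by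
  have hkg : k ≤ g := by omega
  have hEg : (e:ℚ) - g = -(((g - e - 1 : ℕ)):ℚ) - 1 := by
    have h1 : g - e - 1 = g - (e+1) := by omega
    rw [h1, Nat.cast_sub (by omega : e + 1 ≤ g)]
    push_cast; ring
  have hA : fallQ (g:ℚ) k * ((g-k).factorial : ℚ) = (g.factorial : ℚ) := fallQ_nat g k hkg
  have hB : fallQ ((e:ℚ) - g) (e - k) * ((g-e-1).factorial : ℚ)
      = (-1)^(e-k) * ((g-k-1).factorial : ℚ) := by
    have h2 : (g - e - 1) + (e - k) = g - k - 1 := by omega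
    have := fallQ_neg (g-e-1) (e-k)
    rw [h2] at this
    rw [hEg]
    exact this
  have hfact : ((g-k).factorial : ℚ) = ((g:ℚ) - k) * ((g-k-1).factorial : ℚ) := by
    have h3 : g - k = g - k - 1 + 1 := by omega
    rw [h3, Nat.factorial_succ, Nat.cast_mul, ← h3, Nat.cast_sub hkg]
  have hne1 : ((g-e-1).factorial : ℚ) ≠ 0 := Nat.cast_ne_zero.mpr (Nat.factorial_ne_zero _)
  have hne2 : ((g:ℚ) - k) ≠ 0 := by
    rw [← Nat.cast_sub hkg]
    exact_mod_cast (by omega : g - k ≠ 0)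
  rw [eq_div_iff hne2, ← mul_div_assoc, eq_div_iff hne1]
  linear_combination (fallQ (g:ℚ) k * ((g:ℚ)-k)) * hB + ((-1:ℚ))^(e-k) * hA +
    (-((-1:ℚ))^(e-k) * fallQ (g:ℚ) k) * hfact

/-- De Jonquières' classical formula equals the Porteous-style sum over subsets. -/
theorem dJ_bracket_eq (e g : ℕ) (he : 1 ≤ e) (hg : e + 1 ≤ g) (a : Fin e → ℚ) :
    (∏ i, a i) * ((g.factorial : ℚ) / ((g - e - 1).factorial : ℚ)) *
        (∑ j ∈ Finset.range (e + 1),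
          (-1 : ℚ) ^ j * esymmQ e a (e - j) / ((g : ℚ) - e + j))
      = ∑ S : Finset (Fin e),
          fallQ (g : ℚ) S.card * fallQ ((e : ℚ) - g) (e - S.card) *
            (∏ i ∈ S, (a i) ^ 2) * (∏ i ∈ Sᶜ, a i) := by
  classical
  -- Rewrite RHS summand: ∏_S a² · ∏_{Sᶜ} a = ∏_S a · ∏ a
  have hsummand : ∀ S : Finset (Fin e),
      fallQ (g : ℚ) S.card * fallQ ((e : ℚ) - g) (e - S.card) *
        (∏ i ∈ S, (a i) ^ 2) * (∏ i ∈ Sᶜ, a i)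
      = fallQ (g : ℚ) S.card * fallQ ((e : ℚ) - g) (e - S.card) *
        (∏ i ∈ S, a i) * (∏ i, a i) := by
    intro S
    have h1 : (∏ i ∈ S, (a i)^2) = (∏ i ∈ S, a i) * (∏ i ∈ S, a i) := by
      rw [← Finset.prod_mul_distrib]
      exact Finset.prod_congr rfl fun i _ => sq (a i)
    rw [h1, ← Finset.prod_mul_prod_compl S a]
    ring
  simp_rw [hsummand]
  -- Group RHS by cardinality
  have hcard : (Finset.univ : Finset (Fin e)).card = e := by simp
  rw [← Finset.powerset_univ, Finset.powerset_card_biUnion,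
    Finset.sum_biUnion (fun i _ j _ hij => Finset.pairwise_disjoint_powersetCard _ hij), hcard]
  have inner : ∀ k,
      (∑ S ∈ Finset.powersetCard k (Finset.univ : Finset (Fin e)),
        fallQ (g : ℚ) S.card * fallQ ((e : ℚ) - g) (e - S.card) *
          (∏ i ∈ S, a i) * (∏ i, a i))
      = fallQ (g : ℚ) k * fallQ ((e : ℚ) - g) (e - k) * esymmQ e a k * (∏ i, a i) := by
    intro k
    rw [esymmQ]
    rw [show fallQ (g : ℚ) k * fallQ ((e : ℚ) - g) (e - k) *
          (∑ S ∈ Finset.univ.powersetCard k, ∏ i ∈ S, a i) * (∏ i, a i)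
        = ∑ S ∈ Finset.univ.powersetCard k,
            fallQ (g : ℚ) k * fallQ ((e : ℚ) - g) (e - k) * (∏ i ∈ S, a i) * (∏ i, a i) by
      rw [Finset.mul_sum, Finset.sum_mul]]
    exact Finset.sum_congr rfl fun S hS => by
      rw [Finset.mem_powersetCard_univ.1 hS]
  simp_rw [inner]
  -- Reindex LHS sum
  have hreindex : (∑ j ∈ Finset.range (e + 1),
        (-1 : ℚ) ^ j * esymmQ e a (e - j) / ((g : ℚ) - e + j))
      = ∑ k ∈ Finset.range (e + 1),
        (-1 : ℚ) ^ (e - k) * esymmQ e a k / ((g : ℚ) - k) := by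
    rw [← Finset.sum_range_reflect]
    refine Finset.sum_congr rfl fun k hk => ?_
    have hk' : k ≤ e := by
      have := Finset.mem_range.1 hk; omega
    have h1 : e + 1 - 1 - k = e - k := by omega
    have h2 : e - (e - k) = k := by omega
    have h3 : ((e - k : ℕ) : ℚ) = (e:ℚ) - k := by
      rw [Nat.cast_sub hk']
    rw [h1, h2, h3]
    ring
  rw [hreindex, Finset.mul_sum]
  refine Finset.sum_congr rfl fun k hk => ?_
  have hk' : k ≤ e := by
    have := Finset.mem_range.1 hk; omega
  rw [key e g k hk' hg]
  ring
end

section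
/- Let e ≥ 1 and g ≥ e + 1 be integers and let a₁,…,a_e be integers. Then the rational number [a₁⋯a_e] := a₁⋯a_e · (g!/(g−e−1)!) · ∑_{j=0}^{e} (−1)^j σ_{e−j}(a₁,…,a_e)/(g−e+j) is an integer. -/
open Finset

/-- The de Jonquières bracket of integers is an integer. -/
theorem dJ_bracket_integral (e g : ℕ) (he : 1 ≤ e) (hg : e + 1 ≤ g) (a : Fin e → ℤ) :
    ∃ n : ℤ,
      ((∏ i, a i : ℤ) : ℚ) * ((g.factorial : ℚ) / ((g - e - 1).factorial : ℚ)) *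
          (∑ j ∈ Finset.range (e + 1),
            (-1 : ℚ) ^ j *
              ((∑ S ∈ Finset.univ.powersetCard (e - j), ∏ i ∈ S, a i : ℤ) : ℚ) /
              ((g : ℚ) - e + j))
        = (n : ℚ) := by
  have hge : e ≤ g := le_trans (Nat.le_succ e) hg
  have key : ∀ j ∈ Finset.range (e + 1), ∃ m : ℕ,
      (g.factorial : ℚ) / ((g - e - 1).factorial : ℚ) / ((g : ℚ) - e + j) = (m : ℚ) := by
    intro j hj
    rw [Finset.mem_range] at hj
    set k := g - e + j with hk
    have hk1 : 1 ≤ k := by omega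
    have hkg : k ≤ g := by omega
    have hd : (g - e - 1).factorial ∣ (k - 1).factorial :=
      Nat.factorial_dvd_factorial (by omega)
    have hdvd : (g - e - 1).factorial * k ∣ g.factorial := by
      calc (g - e - 1).factorial * k ∣ (k - 1).factorial * k := mul_dvd_mul_right hd k
        _ = k.factorial := by rw [mul_comm]; exact Nat.mul_factorial_pred (by omega)
        _ ∣ g.factorial := Nat.factorial_dvd_factorial hkg
    obtain ⟨m, hm⟩ := hdvd
    refine ⟨m, ?_⟩
    have hcast : ((g : ℚ) - e + j) = (k : ℚ) := by
      rw [hk]; push_cast [Nat.cast_sub hge]; ring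
    rw [hcast]
    have h1 : ((g - e - 1).factorial : ℚ) ≠ 0 := Nat.cast_ne_zero.mpr (Nat.factorial_ne_zero _)
    have h2 : (k : ℚ) ≠ 0 := Nat.cast_ne_zero.mpr (by omega)
    field_simp
    exact_mod_cast hm
  choose! c hc using key
  refine ⟨∑ j ∈ Finset.range (e + 1), (∏ i, a i) * (-1) ^ j *
      (∑ S ∈ Finset.univ.powersetCard (e - j), ∏ i ∈ S, a i) * (c j), ?_⟩
  rw [Finset.mul_sum, Int.cast_sum]
  refine Finset.sum_congr rfl fun j hj => ?_
  have h := hc j hj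
  push_cast
  rw [← h]
  ring
end
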